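/- Let G be a one-dimensional simplicial complex that is a Barycentric refinement, with connection matrix L and g = L^{-1}. Then the off-diagonal structure of g is: g(x,y) = 1 if x ⊊ y or y ⊊ x; g(x,y) = -1 if x,y are distinct vertices joined by an edge of G; g(x,y) = 0 if x,y are distinct edges, and g(x,y) = 0 if dim(x) ≠ dim(y) and x ∩ y = ∅. -/

import Mathlib

/-- Off-diagonal structure of the Green function `g = L⁻¹` for a
one-dimensional Barycentric refined complex: `g(x,y) = 1` if one simplex is
strictly contained in the other (a vertex of an edge), `g(x,y) = -1` for two
distinct vertices joined by an edge, `g(x,y) = 0` for two distinct edges, and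
`g(x,y) = 0` for a vertex and an edge which are disjoint. -/
theorem green_function_entries_1dim {V : Type*} [Fintype V] [DecidableEq V]
    (K : Finset (Finset V))
    (hK1 : ∀ x ∈ K, x.card = 1 ∨ x.card = 2)
    (hKc : ∀ x ∈ K, ∀ y ⊆ x, y.Nonempty → y ∈ K)
    (Γ : SimpleGraph {x // x ∈ K}) [DecidableRel Γ.Adj]
    (hΓ : ∀ x y, Γ.Adj x y ↔ ((x : Finset V) ⊂ (y : Finset V) ∨ (y : Finset V) ⊂ (x : Finset V)))
    (E : Type*) [Fintype E] [DecidableEq E]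
    (t h : E → {x // x ∈ K})
    (hth : ∀ e, Γ.Adj (t e) (h e))
    (hbij : ∀ u v, Γ.Adj u v → ∃! e, s(t e, h e) = s(u, v))
    (ends : ({x // x ∈ K} ⊕ E) → Finset {x // x ∈ K})
    (hends : ∀ z, ends z = Sum.elim (fun x => ({x} : Finset {x // x ∈ K}))
      (fun e => {t e, h e}) z)
    (L : Matrix ({x // x ∈ K} ⊕ E) ({x // x ∈ K} ⊕ E) ℝ)
    (hL : ∀ z w, L z w = if (ends z ∩ ends w).Nonempty then 1 else 0) :
    IsUnit L.det ∧
    (∀ x e, (x = t e ∨ x = h e) →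
      L⁻¹ (Sum.inl x) (Sum.inr e) = 1 ∧ L⁻¹ (Sum.inr e) (Sum.inl x) = 1) ∧
    (∀ x y, x ≠ y → Γ.Adj x y → L⁻¹ (Sum.inl x) (Sum.inl y) = -1) ∧
    (∀ e f, e ≠ f → L⁻¹ (Sum.inr e) (Sum.inr f) = 0) ∧
    (∀ x e, ¬(x = t e ∨ x = h e) →
      L⁻¹ (Sum.inl x) (Sum.inr e) = 0 ∧ L⁻¹ (Sum.inr e) (Sum.inl x) = 0) := by
  classical
  -- basic facts about the edge set
  have hne : ∀ e, t e ≠ h e := fun e => (hth e).ne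
  have hinj : ∀ e f, s(t e, h e) = s(t f, h f) → e = f := by
    intro e f hef
    obtain ⟨u, -, hu⟩ := hbij (t f) (h f) (hth f)
    exact (hu e hef).trans (hu f rfl).symm
  have hadj_of : ∀ {e : E} {x y : {x // x ∈ K}}, s(t e, h e) = s(x, y) → Γ.Adj x y := by
    intro e x y hs
    rcases Sym2.eq_iff.mp hs with ⟨h1, h2⟩ | ⟨h1, h2⟩
    · rw [← h1, ← h2]; exact hth e
    · rw [← h1, ← h2]; exact (hth e).symm
  have hpair : ∀ {x y : {x // x ∈ K}} {e : E}, x ≠ y → (x = t e ∨ x = h e) → (y = t e ∨ y = h e) →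
      s(t e, h e) = s(x, y) := by
    intro x y e hxy hx hy
    rcases hx with rfl | rfl <;> rcases hy with rfl | rfl
    · exact absurd rfl hxy
    · rfl
    · exact Sym2.eq_swap
    · exact absurd rfl hxy
  -- entries of L
  have Lvv : ∀ x u : {x // x ∈ K}, L (Sum.inl x) (Sum.inl u) = if x = u then 1 else 0 := by
    intro x u
    rw [hL, hends, hends]
    simp [Finset.Nonempty, eq_comm]
  have Lve : ∀ (x : {x // x ∈ K}) (e : E),
      L (Sum.inl x) (Sum.inr e) = if x = t e ∨ x = h e then 1 else 0 := by
    intro x e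
    rw [hL, hends, hends]
    simp [Finset.Nonempty]
  have Lev : ∀ (e : E) (x : {x // x ∈ K}),
      L (Sum.inr e) (Sum.inl x) = if x = t e ∨ x = h e then 1 else 0 := by
    intro e x
    rw [hL, hends, hends]
    simp [Finset.Nonempty, eq_comm, or_comm]
  have Lee : ∀ e f : E, L (Sum.inr e) (Sum.inr f) =
      if (t e = t f ∨ t e = h f) ∨ (h e = t f ∨ h e = h f) then 1 else 0 := by
    intro e f
    rw [hL, hends, hends]
    simp only [Sum.elim_inr]
    congr 1
    apply propext
    constructor
    · rintro ⟨a, ha⟩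
      rw [Finset.mem_inter] at ha
      obtain ⟨h1, h2⟩ := ha
      rw [Finset.mem_insert, Finset.mem_singleton] at h1 h2
      rcases h1 with h1 | h1
      · exact Or.inl (by rw [← h1]; exact h2)
      · exact Or.inr (by rw [← h1]; exact h2)
    · rintro (hb | hb)
      · exact ⟨t e, by simp [hb]⟩
      · exact ⟨h e, by simp [hb]⟩
  -- the candidate inverse
  set D : {x // x ∈ K} → ℝ := fun x => ∑ e : E, if x = t e ∨ x = h e then 1 else 0 with hD
  set A : Matrix {x // x ∈ K} {x // x ∈ K} ℝ :=
    fun x y => if x = y then 1 - D x else if Γ.Adj x y then -1 else 0 with hA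
  set B : Matrix {x // x ∈ K} E ℝ := fun x e => if x = t e ∨ x = h e then 1 else 0 with hB
  set C : Matrix E {x // x ∈ K} ℝ := fun e x => if x = t e ∨ x = h e then 1 else 0 with hC
  set Dm : Matrix E E ℝ := fun e f => if e = f then -1 else 0 with hDm
  set g : Matrix ({x // x ∈ K} ⊕ E) ({x // x ∈ K} ⊕ E) ℝ := Matrix.fromBlocks A B C Dm with hg
  -- counting edges between two vertices
  have hcount : ∀ (x y : {x // x ∈ K}),
      (∑ f : E, if s(t f, h f) = s(x, y) then (1 : ℝ) else 0)
        = if Γ.Adj x y then 1 else 0 := by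
    intro x y
    by_cases hadj : Γ.Adj x y
    · obtain ⟨e₀, he₀, hu⟩ := hbij x y hadj
      rw [if_pos hadj]
      have hiff : ∀ f : E, (s(t f, h f) = s(x, y)) ↔ f = e₀ :=
        fun f => ⟨fun hh => hu f hh, fun hh => hh ▸ he₀⟩
      simp only [hiff]
      simp
    · rw [if_neg hadj]
      refine Finset.sum_eq_zero fun f _ => ?_
      rw [if_neg]
      intro hs; exact hadj (hadj_of hs)
  -- the key identity
  have key : L * g = 1 := by
    ext z w
    rw [Matrix.mul_apply, Fintype.sum_sum_type]
    cases z with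
    | inl x =>
      have h1 : ∑ u : {x // x ∈ K}, L (Sum.inl x) (Sum.inl u) * g (Sum.inl u) w = g (Sum.inl x) w := by
        simp only [Lvv, ite_mul, one_mul, zero_mul]
        rw [Finset.sum_ite_eq]
        simp
      rw [h1]
      cases w with
      | inl y =>
        simp only [Lve, hg, Matrix.fromBlocks_apply₁₁, Matrix.fromBlocks_apply₂₁]
        by_cases hxy : x = y
        · subst hxy
          rw [Matrix.one_apply_eq]
          have hterm : ∀ e : E, (if x = t e ∨ x = h e then (1:ℝ) else 0) * C e x
              = if x = t e ∨ x = h e then 1 else 0 := by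
            intro e; simp only [hC]; split_ifs <;> ring
          rw [Finset.sum_congr rfl (fun e _ => hterm e)]
          have hAx : A x x = 1 - D x := by simp [hA]
          rw [hAx]
          have hDx : (∑ e : E, if x = t e ∨ x = h e then (1:ℝ) else 0) = D x := rfl
          rw [hDx]; ring
        · have hone : (1 : Matrix ({x // x ∈ K} ⊕ E) ({x // x ∈ K} ⊕ E) ℝ) (Sum.inl x) (Sum.inl y) = 0 :=
            Matrix.one_apply_ne (by simp [hxy])
          rw [hone]
          have hterm : ∀ e : E,
              (if x = t e ∨ x = h e then (1:ℝ) else 0) * C e y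
                = if s(t e, h e) = s(x, y) then 1 else 0 := by
            intro e
            simp only [hC, ite_mul, one_mul, zero_mul, ← ite_and]
            congr 1
            apply propext
            constructor
            · rintro ⟨hx, hy⟩; exact hpair hxy hx hy
            · intro hs
              rcases Sym2.eq_iff.mp hs with ⟨h1, h2⟩ | ⟨h1, h2⟩
              · exact ⟨Or.inl h1.symm, Or.inr h2.symm⟩
              · exact ⟨Or.inr h2.symm, Or.inl h1.symm⟩
          rw [Finset.sum_congr rfl (fun e _ => hterm e), hcount x y]
          simp only [hA, if_neg hxy]
          by_cases hadj : Γ.Adj x y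
          · rw [if_pos hadj, if_pos hadj]; ring
          · rw [if_neg hadj, if_neg hadj]; ring
      | inr f =>
        simp only [Lve, hg, Matrix.fromBlocks_apply₁₂, Matrix.fromBlocks_apply₂₂]
        have hone : (1 : Matrix ({x // x ∈ K} ⊕ E) ({x // x ∈ K} ⊕ E) ℝ) (Sum.inl x) (Sum.inr f) = 0 :=
          Matrix.one_apply_ne (by simp)
        rw [hone]
        have hterm : ∀ e : E,
            (if x = t e ∨ x = h e then (1:ℝ) else 0) * Dm e f
              = if e = f then (if x = t e ∨ x = h e then (-1:ℝ) else 0) else 0 := by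
          intro e
          simp only [hDm]
          split_ifs <;> ring
        rw [Finset.sum_congr rfl (fun e _ => hterm e), Finset.sum_ite_eq',
          if_pos (Finset.mem_univ f)]
        simp only [hB]
        split_ifs <;> ring
    | inr e =>
      have h1 : ∀ F : {x // x ∈ K} → ℝ,
          (∑ u : {x // x ∈ K}, L (Sum.inr e) (Sum.inl u) * F u) = F (t e) + F (h e) := by
        intro F
        simp only [Lev, ite_mul, one_mul, zero_mul]
        have : ∀ u : {x // x ∈ K}, (if u = t e ∨ u = h e then F u else 0)
            = if u ∈ ({t e, h e} : Finset {x // x ∈ K}) then F u else 0 := by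
          intro u; simp [Finset.mem_insert]
        rw [Finset.sum_congr rfl (fun u _ => this u), Finset.sum_ite_mem,
          Finset.univ_inter, Finset.sum_pair (hne e)]
      cases w with
      | inl y =>
        simp only [hg, Matrix.fromBlocks_apply₁₁, Matrix.fromBlocks_apply₂₁]
        rw [h1 (fun u => A u y)]
        have hone : (1 : Matrix ({x // x ∈ K} ⊕ E) ({x // x ∈ K} ⊕ E) ℝ) (Sum.inr e) (Sum.inl y) = 0 :=
          Matrix.one_apply_ne (by simp)
        rw [hone]
        simp only [Lee]
        by_cases hy : y = t e ∨ y = h e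
        · -- y is an endpoint of e
          have hsum2 : ∀ f : E,
              (if (t e = t f ∨ t e = h f) ∨ (h e = t f ∨ h e = h f) then (1:ℝ) else 0)
                * C f y = if y = t f ∨ y = h f then 1 else 0 := by
            intro f
            simp only [hC, ite_mul, one_mul, zero_mul, ← ite_and]
            congr 1
            apply propext
            constructor
            · rintro ⟨-, h2⟩; exact h2
            · intro h2
              refine ⟨?_, h2⟩
              rcases hy with rfl | rfl
              · exact Or.inl h2
              · exact Or.inr h2
          rw [Finset.sum_congr rfl (fun f _ => hsum2 f)]
          have hDy : (∑ f : E, if y = t f ∨ y = h f then (1:ℝ) else 0) = D y := rfl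
          rw [hDy]
          have e1 : A (t e) (t e) = 1 - D (t e) := by simp [hA]
          have e2 : A (h e) (t e) = -1 := by simp [hA, (hne e).symm, (hth e).symm]
          have e3 : A (h e) (h e) = 1 - D (h e) := by simp [hA]
          have e4 : A (t e) (h e) = -1 := by simp [hA, hne e, hth e]
          rcases hy with rfl | rfl
          · rw [e1, e2]; ring
          · rw [e3, e4]; ring
        · -- y is not an endpoint of e
          push_neg at hy
          obtain ⟨hy1, hy2⟩ := hy
          have hterm : ∀ f : E,
              (if (t e = t f ∨ t e = h f) ∨ (h e = t f ∨ h e = h f) then (1:ℝ) else 0)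
                * C f y
              = (if s(t f, h f) = s(y, t e) then 1 else 0)
                + (if s(t f, h f) = s(y, h e) then 1 else 0) := by
            intro f
            simp only [hC, ite_mul, one_mul, zero_mul, ← ite_and]
            have hiff : ((t e = t f ∨ t e = h f) ∨ (h e = t f ∨ h e = h f))
                ∧ (y = t f ∨ y = h f)
                ↔ (s(t f, h f) = s(y, t e) ∨ s(t f, h f) = s(y, h e)) := by
              constructor
              · rintro ⟨(h1 | h1) | (h1 | h1), h2 | h2⟩
                · exact absurd (h2.trans h1.symm) hy1
                · exact Or.inl (Sym2.eq_iff.mpr (Or.inr ⟨h1.symm, h2.symm⟩))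
                · exact Or.inl (Sym2.eq_iff.mpr (Or.inl ⟨h2.symm, h1.symm⟩))
                · exact absurd (h2.trans h1.symm) hy1
                · exact absurd (h2.trans h1.symm) hy2
                · exact Or.inr (Sym2.eq_iff.mpr (Or.inr ⟨h1.symm, h2.symm⟩))
                · exact Or.inr (Sym2.eq_iff.mpr (Or.inl ⟨h2.symm, h1.symm⟩))
                · exact absurd (h2.trans h1.symm) hy2
              · rintro (hs | hs)
                · rcases Sym2.eq_iff.mp hs with ⟨h1, h2⟩ | ⟨h1, h2⟩
                  · exact ⟨Or.inl (Or.inr h2.symm), Or.inl h1.symm⟩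
                  · exact ⟨Or.inl (Or.inl h1.symm), Or.inr h2.symm⟩
                · rcases Sym2.eq_iff.mp hs with ⟨h1, h2⟩ | ⟨h1, h2⟩
                  · exact ⟨Or.inr (Or.inr h2.symm), Or.inl h1.symm⟩
                  · exact ⟨Or.inr (Or.inl h1.symm), Or.inr h2.symm⟩
            rw [if_congr hiff rfl rfl]
            have hexcl : ¬(s(t f, h f) = s(y, t e) ∧ s(t f, h f) = s(y, h e)) := by
              rintro ⟨hs1, hs2⟩
              have := hs1.symm.trans hs2
              rcases Sym2.eq_iff.mp this with ⟨-, h2⟩ | ⟨h1, -⟩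
              · exact hne e h2
              · exact hy2 h1
            by_cases hp : s(t f, h f) = s(y, t e)
            · by_cases hq : s(t f, h f) = s(y, h e)
              · exact absurd ⟨hp, hq⟩ hexcl
              · rw [if_pos (Or.inl hp), if_pos hp, if_neg hq]; ring
            · by_cases hq : s(t f, h f) = s(y, h e)
              · rw [if_pos (Or.inr hq), if_neg hp, if_pos hq]; ring
              · rw [if_neg (by tauto), if_neg hp, if_neg hq]; ring
          rw [Finset.sum_congr rfl (fun f _ => hterm f), Finset.sum_add_distrib,
            hcount y (t e), hcount y (h e)]
          simp only [hA]
          rw [if_neg (fun hh : t e = y => hy1 hh.symm),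
            if_neg (fun hh : h e = y => hy2 hh.symm)]
          have hc1 : Γ.Adj (t e) y ↔ Γ.Adj y (t e) := ⟨fun hh => hh.symm, fun hh => hh.symm⟩
          have hc2 : Γ.Adj (h e) y ↔ Γ.Adj y (h e) := ⟨fun hh => hh.symm, fun hh => hh.symm⟩
          rw [if_congr hc1 rfl rfl, if_congr hc2 rfl rfl]
          split_ifs <;> ring
      | inr f' =>
        simp only [hg, Matrix.fromBlocks_apply₁₂, Matrix.fromBlocks_apply₂₂]
        rw [h1 (fun u => B u f')]
        simp only [Lee]
        have hterm : ∀ f : E,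
            (if (t e = t f ∨ t e = h f) ∨ (h e = t f ∨ h e = h f) then (1:ℝ) else 0)
              * Dm f f'
            = if f = f'
              then (if (t e = t f ∨ t e = h f) ∨ (h e = t f ∨ h e = h f) then (-1:ℝ) else 0)
              else 0 := by
          intro f
          simp only [hDm]
          split_ifs <;> ring
        rw [Finset.sum_congr rfl (fun f _ => hterm f), Finset.sum_ite_eq']
        simp only [Finset.mem_univ, if_pos]
        by_cases hef : e = f'
        · subst hef
          rw [Matrix.one_apply_eq]
          simp only [hB, if_pos (Or.inl rfl), if_pos (Or.inr rfl)]
          norm_num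
        · have hone : (1 : Matrix ({x // x ∈ K} ⊕ E) ({x // x ∈ K} ⊕ E) ℝ) (Sum.inr e) (Sum.inr f') = 0 :=
            Matrix.one_apply_ne (by simp [hef])
          rw [hone]
          have hnotboth : ¬((t e = t f' ∨ t e = h f') ∧ (h e = t f' ∨ h e = h f')) := by
            rintro ⟨hx1, hx2⟩
            exact hef (hinj f' e (hpair (e := f') (hne e) hx1 hx2)).symm
          simp only [hB]
          by_cases hp : t e = t f' ∨ t e = h f'
          · by_cases hq : h e = t f' ∨ h e = h f'
            · exact absurd ⟨hp, hq⟩ hnotboth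
            · rw [if_pos hp, if_neg hq, if_pos (Or.inl hp)]; ring
          · by_cases hq : h e = t f' ∨ h e = h f'
            · rw [if_neg hp, if_pos hq, if_pos (Or.inr hq)]; ring
            · rw [if_neg hp, if_neg hq, if_neg (by tauto)]; ring
  -- conclude
  have hinv : L⁻¹ = g := Matrix.inv_eq_right_inv key
  refine ⟨Matrix.isUnit_det_of_right_inverse key, ?_, ?_, ?_, ?_⟩
  · intro x e hx
    rw [hinv]
    constructor
    · simp only [hg, Matrix.fromBlocks_apply₁₂, hB, if_pos hx]
      exact if_pos hx
    · simp only [hg, Matrix.fromBlocks_apply₂₁, hC, if_pos hx]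
      exact if_pos hx
  · intro x y hxy hadj
    rw [hinv]
    simp only [hg, Matrix.fromBlocks_apply₁₁, hA, if_neg hxy, if_pos hadj]
    exact (if_neg hxy).trans (if_pos hadj)
  · intro e f hef
    rw [hinv]
    simp only [hg, Matrix.fromBlocks_apply₂₂, hDm, if_neg hef]
    exact if_neg hef
  · intro x e hx
    rw [hinv]
    constructor
    · simp only [hg, Matrix.fromBlocks_apply₁₂, hB, if_neg hx]
      exact if_neg hx
    · simp only [hg, Matrix.fromBlocks_apply₂₁, hC, if_neg hx]
      exact if_neg hx
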